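/- Let A be an m×m real positive semidefinite matrix with A ⪯ I, and let B be an m×m real symmetric matrix. Then ‖A^{1/2} B A^{1/2}‖_F ≤ ‖A^{1/4} B A^{1/4}‖_F. -/

import Mathlib

set_option autoImplicit false

open Matrix Set Filter

attribute [local instance] Matrix.normedAddCommGroup Matrix.normedSpace

namespace BoxSDP

open scoped Classical

/-- Trace inner product `⟨A|B⟩ = Trace(Aᵀ B)`. -/
noncomputable def mip {m k : Type*} [Fintype m] [Fintype k]
    (A B : Matrix m k ℝ) : ℝ :=
  (Aᵀ * B).trace

/-- Frobenius norm `‖A‖_F = √⟨A|A⟩`. -/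
noncomputable def fnorm {m k : Type*} [Fintype m] [Fintype k]
    (A : Matrix m k ℝ) : ℝ :=
  Real.sqrt (mip A A)

/-- The feasible set `F = {X : O ⪯ X ⪯ I}` (membership forces symmetry). -/
def Feas (n : ℕ) : Set (Matrix (Fin n) (Fin n) ℝ) :=
  {X | X.PosSemidef ∧ (1 - X).PosSemidef}

/-- Square root of a positive semidefinite matrix (junk value `0` otherwise);
agrees with `A^{1/2} = Q K^{1/2} Qᵀ` on positive semidefinite matrices. -/
noncomputable def psqrt {m : Type*} [Fintype m] [DecidableEq m]
    (A : Matrix m m ℝ) : Matrix m m ℝ :=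
  if h : A.PosSemidef then
    h.1.eigenvectorUnitary.1 * Matrix.diagonal ((RCLike.ofReal : ℝ → ℝ) ∘ Real.sqrt ∘ h.1.eigenvalues)
      * (star h.1.eigenvectorUnitary : Matrix m m ℝ)
  else 0

/-- Fourth root `A^{1/4}` of a positive semidefinite matrix. -/
noncomputable def proot4 {m : Type*} [Fintype m] [DecidableEq m]
    (A : Matrix m m ℝ) : Matrix m m ℝ :=
  psqrt (psqrt A)

/-- The 2-norm of a symmetric matrix: its largest absolute eigenvalue. -/
noncomputable def norm2 {m : Type*} [Fintype m] [DecidableEq m]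
    (A : Matrix m m ℝ) : ℝ :=
  if h : A.IsHermitian then sSup (Set.range fun i => |h.eigenvalues i|) else 0

/-- The linear functional `H ↦ ⟨G|H⟩`, as a continuous linear map; a function
`f` has gradient matrix `G` at `X` iff `HasFDerivAt f (gradCLM G) X`. -/
noncomputable def gradCLM {n : ℕ} (G : Matrix (Fin n) (Fin n) ℝ) :
    Matrix (Fin n) (Fin n) ℝ →L[ℝ] ℝ :=
  LinearMap.toContinuousLinearMap
    { toFun := fun H => mip G H
      map_add' := fun x y => by
        simp [mip, Matrix.mul_add]
      map_smul' := fun c x => by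
        simp [mip, Matrix.mul_smul] }

/-- The Hessian bilinear form `⟨A | ∇²f(X) | B⟩` induced by the derivative
`hessOp` of the gradient map. -/
noncomputable def hform {n : ℕ}
    (hessOp : Matrix (Fin n) (Fin n) ℝ →L[ℝ] Matrix (Fin n) (Fin n) ℝ)
    (A B : Matrix (Fin n) (Fin n) ℝ) : ℝ :=
  mip A (hessOp B)

/-- `underline-f`: the minimum of `⟨G | Y − X̂⟩` over `Y ∈ F`. -/
noncomputable def underf {n : ℕ} (G Xh : Matrix (Fin n) (Fin n) ℝ) : ℝ :=
  sInf ((fun Y => mip G (Y - Xh)) '' Feas n)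

/-- First-order optimality condition at `Xs` for gradient matrix `G`. -/
def FirstOrderOpt {n : ℕ} (G Xs : Matrix (Fin n) (Fin n) ℝ) : Prop :=
  ∀ X ∈ Feas n, 0 ≤ mip G (X - Xs)

/-- A fixed eigenvalue decomposition `G = P Γ Pᵀ` of a symmetric matrix `G`,
with eigenvalues in descending order, split into the block `Pp, gp` of
positive eigenvalues and the block `Pm, gm` of nonpositive eigenvalues. -/
structure SpecDecomp (n : ℕ) (G : Matrix (Fin n) (Fin n) ℝ) where
  np : ℕ
  nm : ℕ
  hdim : np + nm = n
  Pp : Matrix (Fin n) (Fin np) ℝ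
  Pm : Matrix (Fin n) (Fin nm) ℝ
  gp : Fin np → ℝ
  gm : Fin nm → ℝ
  hgp_pos : ∀ i, 0 < gp i
  hgm_nonpos : ∀ j, gm j ≤ 0
  hgp_anti : ∀ i j : Fin np, i ≤ j → gp j ≤ gp i
  hgm_anti : ∀ i j : Fin nm, i ≤ j → gm j ≤ gm i
  hPp_orth : Ppᵀ * Pp = 1
  hPm_orth : Pmᵀ * Pm = 1
  hPpPm : Ppᵀ * Pm = 0
  hPPT : Pp * Ppᵀ + Pm * Pmᵀ = 1
  hG : G = Pp * Matrix.diagonal gp * Ppᵀ + Pm * Matrix.diagonal gm * Pmᵀ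

namespace SpecDecomp

variable {n : ℕ} {G : Matrix (Fin n) (Fin n) ℝ}

/-- `V₊(X) = P₊ᵀ X P₊`. -/
def Vp (sd : SpecDecomp n G) (X : Matrix (Fin n) (Fin n) ℝ) :
    Matrix (Fin sd.np) (Fin sd.np) ℝ :=
  sd.Ppᵀ * X * sd.Pp

/-- `V₋(X) = P₋ᵀ (I − X) P₋`. -/
def Vm (sd : SpecDecomp n G) (X : Matrix (Fin n) (Fin n) ℝ) :
    Matrix (Fin sd.nm) (Fin sd.nm) ℝ :=
  sd.Pmᵀ * (1 - X) * sd.Pm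

/-- The search direction `D(X) = P M Pᵀ` with blocks
`M₁₁ = V₊^{1/2} Γ₊ V₊^{1/2}`, `M₁₂ = γ_max P₊ᵀ X P₋`,
`M₂₁ = γ_max P₋ᵀ X P₊`, `M₂₂ = V₋^{1/2} Γ₋ V₋^{1/2}`. -/
noncomputable def Dmat (sd : SpecDecomp n G) (X : Matrix (Fin n) (Fin n) ℝ) :
    Matrix (Fin n) (Fin n) ℝ :=
  sd.Pp * (psqrt (sd.Vp X) * Matrix.diagonal sd.gp * psqrt (sd.Vp X)) * sd.Ppᵀ
    + norm2 G • (sd.Pp * (sd.Ppᵀ * X * sd.Pm) * sd.Pmᵀ)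
    + norm2 G • (sd.Pm * (sd.Pmᵀ * X * sd.Pp) * sd.Ppᵀ)
    + sd.Pm * (psqrt (sd.Vm X) * Matrix.diagonal sd.gm * psqrt (sd.Vm X)) * sd.Pmᵀ

/-- `N(X) = ⟨G | D(X)⟩`. -/
noncomputable def Nval (sd : SpecDecomp n G) (X : Matrix (Fin n) (Fin n) ℝ) : ℝ :=
  mip G (sd.Dmat X)

end SpecDecomp


section AuxContraction

variable {m : ℕ}

lemma aux_psqrt {A : Matrix (Fin m) (Fin m) ℝ} (hA : A.PosSemidef) :
    (psqrt A).PosSemidef ∧ psqrt A * psqrt A = A := by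
  rw [psqrt, dif_pos hA]
  constructor
  · have hD : (Matrix.diagonal
        ((RCLike.ofReal : ℝ → ℝ) ∘ Real.sqrt ∘ hA.1.eigenvalues)).PosSemidef :=
      PosSemidef.diagonal (fun i => by simp [Real.sqrt_nonneg])
    have := hD.mul_mul_conjTranspose_same (hA.1.eigenvectorUnitary : Matrix (Fin m) (Fin m) ℝ)
    simpa [Matrix.star_eq_conjTranspose] using this
  · conv_rhs => rw [hA.1.spectral_theorem]
    rw [Unitary.conjStarAlgAut_apply]
    have hU : (star hA.1.eigenvectorUnitary : Matrix (Fin m) (Fin m) ℝ) *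
        (hA.1.eigenvectorUnitary : Matrix (Fin m) (Fin m) ℝ) = 1 :=
      Unitary.coe_star_mul_self _
    have hd : Matrix.diagonal ((RCLike.ofReal : ℝ → ℝ) ∘ Real.sqrt ∘ hA.1.eigenvalues) *
        Matrix.diagonal ((RCLike.ofReal : ℝ → ℝ) ∘ Real.sqrt ∘ hA.1.eigenvalues) =
        Matrix.diagonal ((RCLike.ofReal : ℝ → ℝ) ∘ hA.1.eigenvalues) := by
      rw [Matrix.diagonal_mul_diagonal]
      congr 1
      ext i
      simp [Real.mul_self_sqrt (hA.eigenvalues_nonneg i)]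
    calc _ = (hA.1.eigenvectorUnitary : Matrix (Fin m) (Fin m) ℝ) *
          (Matrix.diagonal ((RCLike.ofReal : ℝ → ℝ) ∘ Real.sqrt ∘ hA.1.eigenvalues) *
          ((star hA.1.eigenvectorUnitary : Matrix (Fin m) (Fin m) ℝ) *
            (hA.1.eigenvectorUnitary : Matrix (Fin m) (Fin m) ℝ)) *
          Matrix.diagonal ((RCLike.ofReal : ℝ → ℝ) ∘ Real.sqrt ∘ hA.1.eigenvalues)) *
          (star hA.1.eigenvectorUnitary : Matrix (Fin m) (Fin m) ℝ) := by
          simp only [Matrix.mul_assoc]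
      _ = _ := by rw [hU, Matrix.mul_one, hd]

lemma aux_trace_nonneg {M : Matrix (Fin m) (Fin m) ℝ} (hM : M.PosSemidef) :
    0 ≤ M.trace := by
  rw [Matrix.trace]
  refine Finset.sum_nonneg fun i _ => ?_
  have := hM.dotProduct_mulVec_nonneg (Pi.single i 1)
  simpa [single_dotProduct, Matrix.diag] using this

lemma aux_one_sub_psd {S : Matrix (Fin m) (Fin m) ℝ} (hS : S.PosSemidef)
    (h : (1 - S * S).PosSemidef) : (1 - S).PosSemidef := by
  refine PosSemidef.of_dotProduct_mulVec_nonneg (Matrix.isHermitian_one.sub hS.1) fun x => ?_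
  have hsx : star x = x := by simp
  have hST : Sᵀ = S := by
    have := hS.1
    rwa [Matrix.IsHermitian, Matrix.conjTranspose_eq_transpose_of_trivial] at this
  have h2 : (S *ᵥ x) ⬝ᵥ (S *ᵥ x) ≤ x ⬝ᵥ x := by
    have := h.dotProduct_mulVec_nonneg x
    rw [hsx, Matrix.sub_mulVec, Matrix.one_mulVec, dotProduct_sub,
      ← Matrix.mulVec_mulVec, Matrix.dotProduct_mulVec] at this
    rw [← Matrix.mulVec_transpose, hST] at this
    linarith
  have hxx : (0:ℝ) ≤ x ⬝ᵥ x := Finset.sum_nonneg fun i _ => mul_self_nonneg _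
  have hcs : (x ⬝ᵥ (S *ᵥ x))^2 ≤ (x ⬝ᵥ x) * ((S *ᵥ x) ⬝ᵥ (S *ᵥ x)) := by
    simpa [dotProduct, sq] using
      Finset.sum_mul_sq_le_sq_mul_sq Finset.univ x (S *ᵥ x)
  rw [hsx, Matrix.sub_mulVec, Matrix.one_mulVec, dotProduct_sub]
  nlinarith [h2, hxx, hcs]

lemma aux_one_sub_sq_psd {S : Matrix (Fin m) (Fin m) ℝ} (hS : S.PosSemidef)
    (h1 : (1 - S).PosSemidef) : (1 - S * S).PosSemidef := by
  obtain ⟨R, hRH, hRR⟩ : ∃ R : Matrix (Fin m) (Fin m) ℝ, Rᴴ = R ∧ R * R = S :=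
    ⟨psqrt S, (aux_psqrt hS).1.1.eq, (aux_psqrt hS).2⟩
  have hkey : Rᴴ * (1 - S) * R = S - S * S := by
    rw [hRH, Matrix.mul_sub, Matrix.sub_mul, mul_one, hRR]
    congr 1
    calc R * S * R = R * (R * R) * R := by rw [hRR]
      _ = (R * R) * (R * R) := by simp only [Matrix.mul_assoc]
      _ = S * S := by rw [hRR]
  have h2 := h1.conjTranspose_mul_mul_same R
  rw [hkey] at h2
  have heq : (1 : Matrix (Fin m) (Fin m) ℝ) - S * S = (1 - S) + (S - S * S) :=
    (sub_add_sub_cancel 1 S (S * S)).symm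
  rw [heq]
  exact h1.add h2

lemma aux_fnorm_mul_left {S X : Matrix (Fin m) (Fin m) ℝ} (hS : S.PosSemidef)
    (h1 : (1 - S).PosSemidef) : fnorm (S * X) ≤ fnorm X := by
  have hST : Sᵀ = S := by
    rw [← Matrix.conjTranspose_eq_transpose_of_trivial, hS.1.eq]
  apply Real.sqrt_le_sqrt
  have hXT : Xᴴ = Xᵀ := Matrix.conjTranspose_eq_transpose_of_trivial X
  have key : mip X X - mip (S * X) (S * X) = (Xᴴ * (1 - S * S) * X).trace := by
    simp only [mip, Matrix.transpose_mul, hST, hXT]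
    have : Xᵀ * (1 - S * S) * X = Xᵀ * X - (Xᵀ * S) * (S * X) := by
      simp only [Matrix.mul_sub, Matrix.sub_mul, Matrix.mul_one, Matrix.one_mul,
        Matrix.mul_assoc]
    rw [this, Matrix.trace_sub]
  have hpos := aux_trace_nonneg ((aux_one_sub_sq_psd hS h1).conjTranspose_mul_mul_same X)
  linarith

lemma aux_fnorm_transpose (X : Matrix (Fin m) (Fin m) ℝ) : fnorm Xᵀ = fnorm X := by
  unfold fnorm mip
  rw [Matrix.transpose_transpose, Matrix.trace_mul_comm]

lemma aux_fnorm_mul_right {S X : Matrix (Fin m) (Fin m) ℝ} (hS : S.PosSemidef)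
    (h1 : (1 - S).PosSemidef) : fnorm (X * S) ≤ fnorm X := by
  have hST : Sᵀ = S := by
    rw [← Matrix.conjTranspose_eq_transpose_of_trivial, hS.1.eq]
  calc fnorm (X * S) = fnorm ((X * S)ᵀ) := (aux_fnorm_transpose _).symm
    _ = fnorm (S * Xᵀ) := by rw [Matrix.transpose_mul, hST]
    _ ≤ fnorm Xᵀ := aux_fnorm_mul_left hS h1
    _ = fnorm X := aux_fnorm_transpose X

end AuxContraction

theorem fnorm_sqrt_conj_le_fnorm_root4_conj {m : ℕ}
    (A B : Matrix (Fin m) (Fin m) ℝ)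
    (hA : A.PosSemidef) (hAI : (1 - A).PosSemidef) (hB : B.IsSymm) :
    fnorm (psqrt A * B * psqrt A) ≤ fnorm (proot4 A * B * proot4 A) := by
  have hM := (aux_psqrt hA).1
  have hpsA : psqrt A = psqrt A := rfl
  have hpsM : proot4 A = psqrt (psqrt A) := by
    rfl
  have hS := (aux_psqrt hM).1
  have h1M : (1 - psqrt A).PosSemidef := by
    refine aux_one_sub_psd hM ?_
    rw [(aux_psqrt hA).2]; exact hAI
  have h1S : (1 - psqrt (psqrt A)).PosSemidef := by
    refine aux_one_sub_psd hS ?_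
    rw [(aux_psqrt hM).2]; exact h1M
  obtain ⟨S, hS', h1S', hSS, hS4⟩ :
      ∃ S : Matrix (Fin m) (Fin m) ℝ, S.PosSemidef ∧ (1 - S).PosSemidef ∧
        S * S = psqrt A ∧ proot4 A = S :=
    ⟨psqrt (psqrt A), hS, h1S, (aux_psqrt hM).2, hpsM⟩
  rw [hS4, ← hSS]
  have heq : (S * S) * B * (S * S) = S * ((S * B * S) * S) := by
    simp only [Matrix.mul_assoc]
  rw [heq]
  calc fnorm (S * ((S * B * S) * S)) ≤ fnorm ((S * B * S) * S) :=
        aux_fnorm_mul_left hS' h1S'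
    _ ≤ fnorm (S * B * S) := aux_fnorm_mul_right hS' h1S'


end BoxSDP
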